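/- Normalization asymptotics: under d_N → 0 and d_N·log N → 0, the partition function Z_N = Σ_{η∈H_N} ∏_{x∈S} w_N(η_x)m_⋆(x)^{η_x} satisfies N·Z_N/d_N → |S_⋆| as N → ∞. -/

import Mathlib

set_option maxHeartbeats 1000000

/-- The weight `w_N(n) = Γ(d_N+n)/(n!Γ(d_N))`, via the recursion
`w(0) = 1`, `w(n+1) = w(n)·(d+n)/(n+1)`. -/
noncomputable def inclW (d : ℝ) : ℕ → ℝ
  | 0 => 1
  | n + 1 => inclW d n * (d + n) / (n + 1)

lemma inclW_pos {d : ℝ} (hd : 0 < d) : ∀ n, 0 < inclW d n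
  | 0 => one_pos
  | n + 1 => by
      rw [inclW]
      have := inclW_pos hd n
      positivity

noncomputable def Hr (n : ℕ) : ℝ := (harmonic n : ℝ)

lemma Hr_zero : Hr 0 = 0 := by simp [Hr, harmonic]

lemma Hr_succ (n : ℕ) : Hr (n+1) = Hr n + 1/(n+1) := by
  unfold Hr; rw [harmonic_succ]; push_cast; ring

lemma Hr_nonneg (n : ℕ) : 0 ≤ Hr n := by
  induction n with
  | zero => simp [Hr_zero]
  | succ n ih => rw [Hr_succ]; positivity

lemma Hr_mono : Monotone Hr := by
  apply monotone_nat_of_le_succ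
  intro n; rw [Hr_succ]
  exact le_add_of_nonneg_right (by positivity)

lemma Hr_le (n : ℕ) : Hr n ≤ 1 + Real.log n := harmonic_le_one_add_log n

/-- Lower bound `d/n ≤ w(n)` for `n ≥ 1`. -/
lemma inclW_ge {d : ℝ} (hd : 0 < d) : ∀ n, 1 ≤ n → d / n ≤ inclW d n
  | 1, _ => by simp [inclW]
  | (n+2), _ => by
      have ih := inclW_ge hd (n+1) (by omega)
      rw [inclW]
      have h1 : (0:ℝ) < ((n:ℝ)+1) := by positivity
      have h2 : (0:ℝ) < ((n:ℝ)+1)+1 := by positivity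
      push_cast at ih ⊢
      rw [div_le_div_iff₀ (by positivity) h2]
      rw [div_le_iff₀ h1] at ih
      nlinarith [inclW_pos hd (n+1)]

/-- Upper bound `w(n) ≤ (d/n)·exp(d·H_{n-1})` for `n ≥ 1`. -/
lemma inclW_le {d : ℝ} (hd : 0 < d) : ∀ n, 1 ≤ n →
    inclW d n ≤ d / n * Real.exp (d * Hr (n-1))
  | 1, _ => by
      simp [inclW, Hr, harmonic]
  | (n+2), _ => by
      have ih := inclW_le hd (n+1) (by omega)
      have hn1 : (0:ℝ) < (n:ℝ)+1 := by positivity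
      have hn2 : (0:ℝ) < (n:ℝ)+2 := by positivity
      rw [inclW]
      have hst : (n+1) - 1 = n := by omega
      rw [hst] at ih
      have hst2 : (n+2) - 1 = n + 1 := by omega
      rw [hst2, Hr_succ]
      have hexp : (1 + d/((n:ℝ)+1)) ≤ Real.exp (d * (1/((n:ℝ)+1))) := by
        have := Real.add_one_le_exp (d * (1/((n:ℝ)+1)))
        calc 1 + d/((n:ℝ)+1) = d * (1/((n:ℝ)+1)) + 1 := by ring
        _ ≤ _ := this
      set E := Real.exp (d * Hr n) with hE
      have hEpos : (0:ℝ) < E := Real.exp_pos _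
      have hw := inclW_pos hd (n+1)
      rw [show d * (Hr n + 1/((n:ℝ)+1)) = d * Hr n + d * (1/((n:ℝ)+1)) by ring,
        Real.exp_add, ← hE]
      set F := Real.exp (d * (1/((n:ℝ)+1))) with hF
      have hFpos : (0:ℝ) < F := Real.exp_pos _
      push_cast
      push_cast at ih
      rw [div_mul_eq_mul_div, div_le_div_iff₀ (by positivity) (by positivity)]
      have key : inclW d (n+1) * (d + (n:ℝ) + 1) ≤ d * E * F := by
        have h1 : inclW d (n+1) * (d + (n:ℝ) + 1) ≤ d / ((n:ℝ)+1) * E * (d + (n:ℝ) + 1) := by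
          apply mul_le_mul_of_nonneg_right ih (by positivity)
        have h2 : d / ((n:ℝ)+1) * E * (d + (n:ℝ) + 1) = d * E * (1 + d/((n:ℝ)+1)) := by
          field_simp; ring
        have h3 : d * E * (1 + d/((n:ℝ)+1)) ≤ d * E * F :=
          mul_le_mul_of_nonneg_left hexp (by positivity)
        linarith
      nlinarith [mul_le_mul_of_nonneg_right key (le_of_lt hn2)]

lemma inclW_le' {d : ℝ} (hd : 0 < d) {n N : ℕ} (h1 : 1 ≤ n) (hnN : n ≤ N) :
    inclW d n ≤ Real.exp (d * Hr N) * d / n := by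
  have hE : Real.exp (d * Hr (n-1)) ≤ Real.exp (d * Hr N) :=
    Real.exp_le_exp.2 (mul_le_mul_of_nonneg_left (Hr_mono (le_trans (Nat.sub_le n 1) hnN)) hd.le)
  have hnpos : (0:ℝ) < n := by exact_mod_cast h1
  calc inclW d n ≤ d / n * Real.exp (d * Hr (n-1)) := inclW_le hd n h1
    _ ≤ d / n * Real.exp (d * Hr N) := by
        apply mul_le_mul_of_nonneg_left hE (by positivity)
    _ = Real.exp (d * Hr N) * d / n := by ring

open Filter

open Finset

theorem remainder_bound {S : Type*} [Fintype S] [DecidableEq S]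
    (m : S → ℝ) (hm0 : ∀ x, 0 < m x) (hm1 : ∀ x, m x ≤ 1)
    (d : ℝ) (hd : 0 < d) (N : ℕ) (hN : 1 ≤ N) :
    ∑ η ∈ (finsuppAntidiag (univ : Finset S) N).filter (fun η => 2 ≤ η.support.card),
        ∏ x, inclW d (η x) * m x ^ (η x)
      ≤ (Real.exp (d * Hr N) * d / N) * (Fintype.card S) *
          ((1 + Real.exp (d * Hr N) * d * Hr N) ^ (Fintype.card S - 1) - 1) := by
  classical
  set c : ℝ := Real.exp (d * Hr N) * d with hc
  have hcpos : 0 < c := by positivity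
  set h : ℕ → ℝ := fun n => if n = 0 then 1 else c / n with hh
  have hhpos : ∀ n, 0 < h n := by
    intro n; rw [hh]; dsimp only; split
    · norm_num
    · next hn0 =>
        have hn' : (0:ℝ) < n := by exact_mod_cast Nat.pos_of_ne_zero hn0
        exact div_pos hcpos hn'
  set B := (finsuppAntidiag (univ : Finset S) N).filter (fun η => 2 ≤ η.support.card) with hB
  -- basic facts about members of B
  have hmemA : ∀ η ∈ finsuppAntidiag (univ : Finset S) N, ∑ x, η x = N := by
    intro η hη
    exact ((mem_finsuppAntidiag).1 hη).1
  have hsupp_sum : ∀ η ∈ finsuppAntidiag (univ : Finset S) N, ∑ x ∈ η.support, η x = N := by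
    intro η hη
    rw [← hmemA η hη]
    exact Finset.sum_subset (subset_univ _) (by
      intro x _ hx
      simpa using (Finsupp.notMem_support_iff.1 hx))
  have hle : ∀ η ∈ finsuppAntidiag (univ : Finset S) N, ∀ x, η x ≤ N := by
    intro η hη x
    rw [← hmemA η hη]
    exact Finset.single_le_sum (f := fun x => η x) (fun _ _ => Nat.zero_le _) (mem_univ x)
  -- Step 1: pointwise bound by ∏ h(η x)
  have step1 : ∀ η ∈ B, (∏ x, inclW d (η x) * m x ^ (η x)) ≤ ∏ x, h (η x) := by
    intro η hη
    have hηA : η ∈ finsuppAntidiag (univ : Finset S) N := (mem_filter.1 hη).1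
    apply Finset.prod_le_prod
    · intro x _
      have := inclW_pos hd (η x)
      have := (hm0 x)
      positivity
    · intro x _
      rcases Nat.eq_zero_or_pos (η x) with h0 | h1
      · rw [h0]; simp [hh, inclW]
      · have hz : η x ≠ 0 := Nat.pos_iff_ne_zero.1 h1
        rw [hh]; dsimp only; rw [if_neg hz]
        calc inclW d (η x) * m x ^ η x ≤ inclW d (η x) * 1 := by
              apply mul_le_mul_of_nonneg_left (pow_le_one₀ (le_of_lt (hm0 x)) (hm1 x))
                (le_of_lt (inclW_pos hd _))
        _ = inclW d (η x) := mul_one _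
        _ ≤ c / η x := inclW_le' hd h1 (hle η hηA x)
  -- the function-version of the erased product
  set G : (S →₀ ℕ) → S → ℝ := fun η x0 => ∏ x, h (Function.update ⇑η x0 0 x) with hG
  have hGnonneg : ∀ η x0, 0 ≤ G η x0 := by
    intro η x0; rw [hG]; exact Finset.prod_nonneg fun x _ => le_of_lt (hhpos _)
  -- Step 2: the exchange identity
  have step2 : ∀ η ∈ B, (∏ x, h (η x)) = (c / N) * ∑ x0 ∈ η.support, G η x0 := by
    intro η hη
    have hηA : η ∈ finsuppAntidiag (univ : Finset S) N := (mem_filter.1 hη).1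
    have point : ∀ x0 ∈ η.support, c * G η x0 = (η x0 : ℝ) * ∏ x, h (η x) := by
      intro x0 hx0
      have hz : η x0 ≠ 0 := Finsupp.mem_support_iff.1 hx0
      have hzR : ((η x0 : ℕ) : ℝ) ≠ 0 := Nat.cast_ne_zero.2 hz
      have e1 : G η x0 = ∏ x ∈ univ.erase x0, h (η x) := by
        rw [hG]
        dsimp only
        rw [← Finset.mul_prod_erase univ _ (mem_univ x0)]
        rw [Function.update_self]
        have h0 : h 0 = 1 := by simp [hh]
        rw [h0, one_mul]
        exact Finset.prod_congr rfl fun x hx =>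
          by rw [Function.update_of_ne (Finset.ne_of_mem_erase hx)]
      have e2 : (∏ x, h (η x)) = h (η x0) * ∏ x ∈ univ.erase x0, h (η x) :=
        (Finset.mul_prod_erase univ _ (mem_univ x0)).symm
      rw [e1, e2, hh]
      dsimp only
      rw [if_neg hz]
      field_simp
    have hNne : (N:ℝ) ≠ 0 := by positivity
    have : ∑ x0 ∈ η.support, c * G η x0 = (N : ℝ) * ∏ x, h (η x) := by
      rw [Finset.sum_congr rfl point, ← Finset.sum_mul]
      congr 1
      rw [← Nat.cast_sum]
      exact_mod_cast congrArg (Nat.cast (R := ℝ)) (hsupp_sum η hηA)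
    rw [← Finset.mul_sum] at this
    field_simp
    linarith [this]
  -- Step 3/4: bound the double sum
  set s := Fintype.card S with hs
  have step4 : ∀ x0 : S, ∑ η ∈ B.filter (fun η => x0 ∈ η.support), G η x0
      ≤ (1 + c * Hr N) ^ (s - 1) - 1 := by
    intro x0
    set t : S → Finset ℕ := fun x => if x = x0 then {0} else Finset.range (N+1) with ht
    set z : S → ℕ := fun _ => 0 with hz
    set g : (S → ℕ) → ℝ := fun f => ∏ x, h (f x) with hg
    have hgnonneg : ∀ f, 0 ≤ g f := fun f => Finset.prod_nonneg fun x _ => le_of_lt (hhpos _)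
    set φ : (S →₀ ℕ) → S → ℕ := fun η => Function.update ⇑η x0 0 with hφ
    have hzmem : z ∈ Fintype.piFinset t := by
      rw [Fintype.mem_piFinset]
      intro x
      rw [ht, hz]
      dsimp only
      split
      · exact Finset.mem_singleton_self 0
      · exact Finset.mem_range.2 (Nat.succ_pos N)
    have hmaps : ∀ η ∈ B.filter (fun η => x0 ∈ η.support),
        φ η ∈ (Fintype.piFinset t) \ {z} := by
      intro η hη
      rw [mem_filter] at hη
      obtain ⟨hηB, hx0⟩ := hη
      rw [mem_filter] at hηB
      obtain ⟨hηA, hcard⟩ := hηB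
      rw [Finset.mem_sdiff]
      constructor
      · rw [Fintype.mem_piFinset]
        intro x
        rw [ht, hφ]
        dsimp only
        by_cases hxx : x = x0
        · subst hxx
          rw [if_pos rfl, Function.update_self]
          exact Finset.mem_singleton_self 0
        · rw [if_neg hxx, Function.update_of_ne hxx]
          exact Finset.mem_range.2 (Nat.lt_succ_of_le (hle η hηA x))
      · -- φ η ≠ z since there is another support element
        rw [Finset.mem_singleton]
        intro hcontr
        have hcard' : 1 ≤ (η.support.erase x0).card := by
          rw [Finset.card_erase_of_mem hx0]
          omega
        obtain ⟨x, hx⟩ := Finset.card_pos.1 (by omega : 0 < (η.support.erase x0).card)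
        have hxne : x ≠ x0 := Finset.ne_of_mem_erase hx
        have hxsupp : x ∈ η.support := Finset.mem_of_mem_erase hx
        have : φ η x = η x := by rw [hφ]; exact Function.update_of_ne hxne _ _
        rw [hcontr] at this
        exact (Finsupp.mem_support_iff.1 hxsupp) (by rw [hz] at this; exact this.symm)
    have hinj : ∀ η₁ ∈ B.filter (fun η => x0 ∈ η.support),
        ∀ η₂ ∈ B.filter (fun η => x0 ∈ η.support), φ η₁ = φ η₂ → η₁ = η₂ := by
      intro η₁ h₁ η₂ h₂ heq
      have hA₁ : η₁ ∈ finsuppAntidiag (univ : Finset S) N :=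
        (mem_filter.1 (mem_filter.1 h₁).1).1
      have hA₂ : η₂ ∈ finsuppAntidiag (univ : Finset S) N :=
        (mem_filter.1 (mem_filter.1 h₂).1).1
      have hoff : ∀ x, x ≠ x0 → η₁ x = η₂ x := by
        intro x hx
        have := congrFun heq x
        rw [hφ] at this
        dsimp only at this
        rwa [Function.update_of_ne hx, Function.update_of_ne hx] at this
      have hsum₁ := hmemA η₁ hA₁
      have hsum₂ := hmemA η₂ hA₂
      have e₁ : η₁ x0 + ∑ x ∈ univ.erase x0, η₁ x = N := by
        rw [← hsum₁, Finset.add_sum_erase univ _ (mem_univ x0)]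
      have e₂ : η₂ x0 + ∑ x ∈ univ.erase x0, η₂ x = N := by
        rw [← hsum₂, Finset.add_sum_erase univ _ (mem_univ x0)]
      have esum : ∑ x ∈ univ.erase x0, η₁ x = ∑ x ∈ univ.erase x0, η₂ x :=
        Finset.sum_congr rfl fun x hx => hoff x (Finset.ne_of_mem_erase hx)
      have hx0eq : η₁ x0 = η₂ x0 := by omega
      ext x
      by_cases hxx : x = x0
      · rw [hxx]; exact hx0eq
      · exact hoff x hxx
    -- now compare with the sum over the pi-finset
    have himg : ∑ η ∈ B.filter (fun η => x0 ∈ η.support), G η x0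
        = ∑ f ∈ (B.filter (fun η => x0 ∈ η.support)).image φ, g f := by
      rw [Finset.sum_image hinj]
    have hsub : (B.filter (fun η => x0 ∈ η.support)).image φ ⊆ (Fintype.piFinset t) \ {z} := by
      intro f hf
      obtain ⟨η, hη, rfl⟩ := Finset.mem_image.1 hf
      exact hmaps η hη
    have hbig : ∑ f ∈ (Fintype.piFinset t) \ {z}, g f = (1 + c * Hr N) ^ (s - 1) - 1 := by
      have hzsub : ({z} : Finset (S → ℕ)) ⊆ Fintype.piFinset t :=
        Finset.singleton_subset_iff.2 hzmem
      rw [Finset.sum_sdiff_eq_sub hzsub, Finset.sum_singleton]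
      have hgz : g z = 1 := by
        rw [hg, hz]
        dsimp only
        have h0 : h 0 = 1 := by simp [hh]
        simp [h0]
      rw [hgz]
      congr 1
      rw [hg]
      rw [← Finset.prod_univ_sum t (fun _ n => h n)]
      have hrow : ∀ x : S, ∑ n ∈ t x, h n = if x = x0 then 1 else (1 + c * Hr N) := by
        intro x
        rw [ht]
        dsimp only
        split
        · rw [Finset.sum_singleton]; simp [hh]
        · rw [Finset.sum_range_succ']
          have h0 : h 0 = 1 := by simp [hh]
          rw [h0]
          have : ∑ i ∈ Finset.range N, h (i+1) = c * Hr N := by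
            rw [show Hr N = ∑ i ∈ Finset.range N, (1:ℝ)/(i+1) by
              rw [Hr, harmonic]; push_cast; simp [one_div]]
            rw [Finset.mul_sum]
            apply Finset.sum_congr rfl
            intro i _
            rw [hh]
            dsimp only
            rw [if_neg (Nat.succ_ne_zero i)]
            push_cast
            ring
          rw [this]; ring
      rw [Finset.prod_congr rfl (fun x _ => hrow x)]
      rw [← Finset.mul_prod_erase univ _ (mem_univ x0), if_pos rfl, one_mul]
      rw [Finset.prod_congr rfl (fun x hx => if_neg (Finset.ne_of_mem_erase hx)),
        Finset.prod_const, Finset.card_erase_of_mem (mem_univ x0), Finset.card_univ]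
    calc ∑ η ∈ B.filter (fun η => x0 ∈ η.support), G η x0
        = ∑ f ∈ (B.filter (fun η => x0 ∈ η.support)).image φ, g f := himg
      _ ≤ ∑ f ∈ (Fintype.piFinset t) \ {z}, g f :=
          Finset.sum_le_sum_of_subset_of_nonneg hsub fun f _ _ => hgnonneg f
      _ = (1 + c * Hr N) ^ (s - 1) - 1 := hbig
  -- assemble
  have assemble : ∑ η ∈ B, ∏ x, inclW d (η x) * m x ^ (η x)
      ≤ (c / N) * ∑ x0 : S, ∑ η ∈ B.filter (fun η => x0 ∈ η.support), G η x0 := by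
    calc ∑ η ∈ B, ∏ x, inclW d (η x) * m x ^ (η x)
        ≤ ∑ η ∈ B, ∏ x, h (η x) := Finset.sum_le_sum step1
      _ = ∑ η ∈ B, (c / N) * ∑ x0 ∈ η.support, G η x0 := Finset.sum_congr rfl step2
      _ = (c / N) * ∑ η ∈ B, ∑ x0 ∈ η.support, G η x0 := by rw [Finset.mul_sum]
      _ = (c / N) * ∑ η ∈ B, ∑ x0 : S, if x0 ∈ η.support then G η x0 else 0 := by
          congr 1
          apply Finset.sum_congr rfl
          intro η _
          rw [Finset.sum_ite_mem, Finset.univ_inter]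
      _ = (c / N) * ∑ x0 : S, ∑ η ∈ B, (if x0 ∈ η.support then G η x0 else 0) := by
          rw [Finset.sum_comm]
      _ = (c / N) * ∑ x0 : S, ∑ η ∈ B.filter (fun η => x0 ∈ η.support), G η x0 := by
          congr 1
          exact Finset.sum_congr rfl fun x0 _ => (Finset.sum_filter _ _).symm
  calc ∑ η ∈ B, ∏ x, inclW d (η x) * m x ^ (η x)
      ≤ (c / N) * ∑ x0 : S, ∑ η ∈ B.filter (fun η => x0 ∈ η.support), G η x0 := assemble
    _ ≤ (c / N) * ∑ x0 : S, ((1 + c * Hr N) ^ (s - 1) - 1) := by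
        apply mul_le_mul_of_nonneg_left (Finset.sum_le_sum fun x0 _ => step4 x0)
        positivity
    _ = (c / N) * s * ((1 + c * Hr N) ^ (s - 1) - 1) := by
        rw [Finset.sum_const, Finset.card_univ, nsmul_eq_mul]
        ring

/-- elementary: `(1+t)^m ≤ 1 + (2^m - 1) t` for `t ∈ [0,1]`. -/
lemma pow_one_add_le (t : ℝ) (ht0 : 0 ≤ t) (ht1 : t ≤ 1) :
    ∀ m : ℕ, (1 + t) ^ m ≤ 1 + ((2:ℝ) ^ m - 1) * t
  | 0 => by norm_num
  | (m+1) => by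
      have ih := pow_one_add_le t ht0 ht1 m
      have h2 : (1:ℝ) ≤ 2 ^ m := one_le_pow₀ (by norm_num)
      calc (1+t)^(m+1) = (1+t)^m * (1+t) := by ring
        _ ≤ (1 + ((2:ℝ)^m - 1)*t) * (1+t) := by
            apply mul_le_mul_of_nonneg_right ih (by linarith)
        _ = 1 + (2*(2:ℝ)^m - 1)*t + ((2:ℝ)^m - 1)*t^2 - ((2:ℝ)^m - 1)*t := by ring
        _ ≤ 1 + (2*(2:ℝ)^m - 1)*t := by nlinarith [mul_nonneg (by linarith : (0:ℝ) ≤ (2:ℝ)^m - 1) (by nlinarith : (0:ℝ) ≤ t - t^2)]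
        _ = 1 + ((2:ℝ)^(m+1) - 1)*t := by ring

/-- Normalization asymptotics: under `d_N > 0` and `d_N·log N → 0`, the
partition function `Z_N = Σ_{η∈H_N} ∏_x w_N(η_x) m_⋆(x)^{η_x}` satisfies
`N·Z_N/d_N → |S_⋆|`. -/
theorem partition_function_asymptotics
    {S : Type*} [Fintype S] [DecidableEq S]
    (mstar : S → ℝ) (hm0 : ∀ x, 0 < mstar x) (hm1 : ∀ x, mstar x ≤ 1)
    (Sstar : Finset S) (hSstar : ∀ x, x ∈ Sstar ↔ mstar x = 1)
    (hne : Sstar.Nonempty)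
    (d : ℕ → ℝ) (hd : ∀ N, 0 < d N)
    (hdlog : Filter.Tendsto (fun N => d N * Real.log N) Filter.atTop (nhds 0))
    (Z : ℕ → ℝ)
    (hZ : ∀ N, Z N = ∑ η ∈ Finset.finsuppAntidiag (Finset.univ : Finset S) N,
        ∏ x, inclW (d N) (η x) * mstar x ^ (η x)) :
    Filter.Tendsto (fun N : ℕ => (N : ℝ) * Z N / d N) Filter.atTop
      (nhds (Sstar.card : ℝ)) := by
  classical
  -- d → 0
  have hd0 : Tendsto d atTop (nhds 0) := by
    apply tendsto_of_tendsto_of_tendsto_of_le_of_le' tendsto_const_nhds hdlog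
    · exact Eventually.of_forall fun N => le_of_lt (hd N)
    · filter_upwards [eventually_ge_atTop 3] with N hN
      have hlog : 1 ≤ Real.log N := by
        rw [← Real.log_exp 1]
        apply Real.log_le_log (Real.exp_pos 1)
        calc Real.exp 1 ≤ 2.7182818286 := Real.exp_one_lt_d9.le
          _ ≤ (N:ℝ) := by
              have : (3:ℝ) ≤ N := by exact_mod_cast hN
              linarith
      nlinarith [hd N]
  -- d * (1 + log N) → 0
  have hdlog1 : Tendsto (fun N => d N * (1 + Real.log N)) atTop (nhds 0) := by
    have := hd0.add hdlog
    simp only [add_zero] at this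
    apply this.congr
    intro N; ring
  -- the remainder term
  set R : ℕ → ℝ := fun N =>
    ∑ η ∈ (finsuppAntidiag (univ : Finset S) N).filter (fun η => 2 ≤ η.support.card),
        ∏ x, inclW (d N) (η x) * mstar x ^ (η x) with hR
  -- Step A: decomposition for N ≥ 1
  have stepA : ∀ N : ℕ, 1 ≤ N →
      (N:ℝ) * Z N / d N
        = ((N:ℝ) * inclW (d N) N / d N) * (∑ x, mstar x ^ N) + ((N:ℝ) / d N) * R N := by
    intro N hN
    have hsplit : Z N
        = (∑ η ∈ (finsuppAntidiag (univ : Finset S) N).filter (fun η => η.support.card ≤ 1),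
            ∏ x, inclW (d N) (η x) * mstar x ^ (η x)) + R N := by
      rw [hZ N, hR]
      rw [← Finset.sum_filter_add_sum_filter_not (finsuppAntidiag (univ : Finset S) N)
        (fun η => η.support.card ≤ 1)]
      congr 1
      apply Finset.sum_congr ?_ fun _ _ => rfl
      apply Finset.filter_congr
      intro η _
      simp only [not_le]
      constructor
      · intro hh; omega
      · intro hh; omega
    have hsingles : (finsuppAntidiag (univ : Finset S) N).filter (fun η => η.support.card ≤ 1)
        = univ.image (fun x : S => Finsupp.single x N) := by
      ext η
      simp only [mem_filter, mem_image, mem_univ, true_and]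
      constructor
      · rintro ⟨hA, hcard⟩
        have hsum : ∑ x, η x = N := (mem_finsuppAntidiag.1 hA).1
        have hnz : η ≠ 0 := by
          intro h0
          rw [h0] at hsum
          simp at hsum
          omega
        have hsupp : η.support.Nonempty := Finsupp.support_nonempty_iff.2 hnz
        have hcard1 : η.support.card = 1 := le_antisymm hcard (Finset.card_pos.2 hsupp)
        obtain ⟨x, hx⟩ := Finset.card_eq_one.1 hcard1
        refine ⟨x, ?_⟩
        have h2 := (Finsupp.support_eq_singleton.1 hx).2
        have hηx : η x = N := by
          rw [← hsum]
          rw [Finset.sum_eq_single_of_mem x (mem_univ x)]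
          intro y _ hy
          have : y ∉ η.support := by rw [hx]; simp [hy]
          simpa using Finsupp.notMem_support_iff.1 this
        rw [← hηx]; exact h2.symm
      · rintro ⟨x, rfl⟩
        constructor
        · rw [mem_finsuppAntidiag]
          constructor
          · rw [Finset.sum_eq_single_of_mem x (mem_univ x)]
            · simp
            · intro y _ hy
              exact Finsupp.single_eq_of_ne' (Ne.symm hy)
          · exact subset_univ _
        · exact le_trans (Finset.card_le_card Finsupp.support_single_subset) (by simp)
    have hNne : N ≠ 0 := by omega
    have hsingsum : (∑ η ∈ (finsuppAntidiag (univ : Finset S) N).filter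
          (fun η => η.support.card ≤ 1), ∏ x, inclW (d N) (η x) * mstar x ^ (η x))
        = inclW (d N) N * ∑ x, mstar x ^ N := by
      rw [hsingles]
      rw [Finset.sum_image (by
        intro x _ y _ hxy
        by_contra hne'
        have := congrFun (congrArg (⇑) hxy) x
        rw [Finsupp.single_eq_same, Finsupp.single_eq_of_ne' (Ne.symm hne')] at this
        exact hNne this)]
      rw [Finset.mul_sum]
      apply Finset.sum_congr rfl
      intro x _
      rw [Finset.prod_eq_single_of_mem x (mem_univ x)]
      · rw [Finsupp.single_eq_same]
      · intro y _ hy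
        rw [Finsupp.single_eq_of_ne' (Ne.symm hy)]
        simp [inclW]
    rw [hsplit, hsingsum]
    field_simp
  -- Step B : N w(N)/d N → 1
  have stepB : Tendsto (fun N : ℕ => (N:ℝ) * inclW (d N) N / d N) atTop (nhds 1) := by
    have hup : Tendsto (fun N : ℕ => Real.exp (d N * (1 + Real.log N))) atTop (nhds 1) := by
      have := (Real.continuous_exp.tendsto 0).comp hdlog1
      simpa [Function.comp_def] using this
    apply tendsto_of_tendsto_of_tendsto_of_le_of_le' tendsto_const_nhds hup
    · filter_upwards [eventually_ge_atTop 1] with N hN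
      have := inclW_ge (hd N) N hN
      have hNpos : (0:ℝ) < N := by exact_mod_cast hN
      rw [le_div_iff₀ (hd N)]
      calc 1 * d N = (N:ℝ) * (d N / N) := by field_simp
        _ ≤ (N:ℝ) * inclW (d N) N := by
            apply mul_le_mul_of_nonneg_left this (le_of_lt hNpos)
    · filter_upwards [eventually_ge_atTop 1] with N hN
      have hNpos : (0:ℝ) < N := by exact_mod_cast hN
      have h1 := inclW_le (hd N) N hN
      have h2 : Hr (N - 1) ≤ 1 + Real.log N :=
        le_trans (Hr_mono (Nat.sub_le N 1)) (Hr_le N)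
      have h3 : Real.exp (d N * Hr (N-1)) ≤ Real.exp (d N * (1 + Real.log N)) :=
        Real.exp_le_exp.2 (mul_le_mul_of_nonneg_left h2 (le_of_lt (hd N)))
      rw [div_le_iff₀ (hd N)]
      calc (N:ℝ) * inclW (d N) N ≤ (N:ℝ) * (d N / N * Real.exp (d N * Hr (N-1))) := by
            apply mul_le_mul_of_nonneg_left h1 (le_of_lt hNpos)
        _ = Real.exp (d N * Hr (N-1)) * d N := by field_simp
        _ ≤ Real.exp (d N * (1 + Real.log N)) * d N :=
            mul_le_mul_of_nonneg_right h3 (le_of_lt (hd N))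
  -- Step C : sum of m^N → card Sstar
  have stepC : Tendsto (fun N : ℕ => ∑ x, mstar x ^ N) atTop (nhds (Sstar.card : ℝ)) := by
    have hsplit : ∀ N : ℕ, (∑ x, mstar x ^ N)
        = (∑ x ∈ Sstar, mstar x ^ N) + ∑ x ∈ Sstarᶜ, mstar x ^ N := by
      intro N
      rw [Finset.sum_add_sum_compl]
    have h1 : ∀ N : ℕ, (∑ x ∈ Sstar, mstar x ^ N) = Sstar.card := by
      intro N
      rw [Finset.sum_congr rfl (fun x hx => by rw [(hSstar x).1 hx, one_pow])]
      simp
    have h2 : Tendsto (fun N : ℕ => ∑ x ∈ Sstarᶜ, mstar x ^ N) atTop (nhds 0) := by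
      have : Tendsto (fun N : ℕ => ∑ x ∈ Sstarᶜ, mstar x ^ N) atTop
          (nhds (∑ x ∈ Sstarᶜ, (0:ℝ))) := by
        apply tendsto_finset_sum
        intro x hx
        apply tendsto_pow_atTop_nhds_zero_of_lt_one (le_of_lt (hm0 x))
        rcases lt_or_eq_of_le (hm1 x) with h | h
        · exact h
        · exact absurd ((hSstar x).2 h) (Finset.mem_compl.1 hx)
      simpa using this
    have := h2.const_add (Sstar.card : ℝ)
    simp only [add_zero] at this
    apply this.congr
    intro N
    rw [hsplit N, h1 N]
  -- Step D : remainder → 0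
  have stepD : Tendsto (fun N : ℕ => ((N:ℝ) / d N) * R N) atTop (nhds 0) := by
    set s := Fintype.card S with hs
    set K : ℝ := 2 * s * (2:ℝ)^(s-1) * 2 with hK
    have hbound : ∀ᶠ N : ℕ in atTop,
        ((N:ℝ) / d N) * R N ≤ K * (d N * (1 + Real.log N)) := by
      have hev1 : ∀ᶠ N : ℕ in atTop, d N * (1 + Real.log N) ≤ 1/4 :=
        hdlog1.eventually (eventually_le_nhds (by norm_num))
      have hexp4 : Real.exp ((1:ℝ)/4) ≤ 2 := by
        have ha : Real.exp ((1:ℝ)/4) ^ (4:ℕ) = Real.exp 1 := by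
          rw [← Real.exp_nat_mul]; norm_num
        refine le_of_pow_le_pow_left₀ (n := 4) (by norm_num) (by norm_num) ?_
        rw [ha]
        nlinarith [Real.exp_one_lt_d9]
      filter_upwards [eventually_ge_atTop 1, hev1] with N hN hsmall
      have hNpos : (0:ℝ) < N := by exact_mod_cast hN
      have hDpos := hd N
      have hHr : 0 ≤ Hr N := Hr_nonneg N
      have hH1 : Hr N ≤ 1 + Real.log N := Hr_le N
      have hDH : d N * Hr N ≤ 1/4 :=
        le_trans (mul_le_mul_of_nonneg_left hH1 hDpos.le) hsmall
      have hDHpos : 0 ≤ d N * Hr N := by positivity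
      set C := Real.exp (d N * Hr N) with hC
      have hCpos : 0 < C := Real.exp_pos _
      have hC2 : C ≤ 2 := le_trans (Real.exp_le_exp.2 hDH) hexp4
      set t := C * d N * Hr N with htdef
      have ht0 : 0 ≤ t := by positivity
      have ht1 : t ≤ 1 := by nlinarith
      have hpow := pow_one_add_le t ht0 ht1 (s-1)
      have hrb : R N ≤ (C * d N / N) * (Fintype.card S) *
          ((1 + C * d N * Hr N) ^ (Fintype.card S - 1) - 1) :=
        remainder_bound mstar hm0 hm1 (d N) (hd N) N hN
      have hX0 : (0:ℝ) ≤ (1 + t) ^ (s-1) - 1 := by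
        have : (1:ℝ) ≤ (1+t)^(s-1) := one_le_pow₀ (by linarith)
        linarith
      have hpow2 : (2:ℝ)^(s-1) - 1 ≤ 2^(s-1) := by linarith
      have step1 : ((N:ℝ) / d N) * R N
          ≤ ((N:ℝ) / d N) * ((C * d N / N) * s * ((1 + t) ^ (s-1) - 1)) := by
        apply mul_le_mul_of_nonneg_left hrb (by positivity)
      have step2 : ((N:ℝ) / d N) * ((C * d N / N) * s * ((1 + t) ^ (s-1) - 1))
          = C * s * ((1 + t) ^ (s-1) - 1) := by
        field_simp
      have step3 : C * s * ((1 + t) ^ (s-1) - 1) ≤ C * s * ((2:ℝ)^(s-1) * t) := by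
        apply mul_le_mul_of_nonneg_left ?_ (by positivity)
        have : (1 + t) ^ (s-1) - 1 ≤ ((2:ℝ)^(s-1) - 1) * t := by linarith
        calc (1 + t) ^ (s-1) - 1 ≤ ((2:ℝ)^(s-1) - 1) * t := this
          _ ≤ (2:ℝ)^(s-1) * t := by nlinarith
      have step4 : C * s * ((2:ℝ)^(s-1) * t) ≤ K * (d N * (1 + Real.log N)) := by
        rw [hK, htdef]
        have hCt : C * (C * d N * Hr N) ≤ 4 * (d N * (1 + Real.log N)) := by
          nlinarith [mul_le_mul_of_nonneg_left hH1 hDpos.le]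
        have hs0 : (0:ℝ) ≤ (s:ℝ) * (2:ℝ)^(s-1) := by positivity
        calc C * s * ((2:ℝ)^(s-1) * (C * d N * Hr N))
            = ((s:ℝ) * (2:ℝ)^(s-1)) * (C * (C * d N * Hr N)) := by ring
          _ ≤ ((s:ℝ) * (2:ℝ)^(s-1)) * (4 * (d N * (1 + Real.log N))) :=
              mul_le_mul_of_nonneg_left hCt hs0
          _ = 2 * (s:ℝ) * (2:ℝ)^(s-1) * 2 * (d N * (1 + Real.log N)) := by ring
      calc ((N:ℝ) / d N) * R N ≤ C * s * ((1 + t) ^ (s-1) - 1) := by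
            rw [← step2]; exact step1
        _ ≤ C * s * ((2:ℝ)^(s-1) * t) := step3
        _ ≤ K * (d N * (1 + Real.log N)) := step4
    have hnonneg : ∀ᶠ N : ℕ in atTop, 0 ≤ ((N:ℝ) / d N) * R N := by
      apply Eventually.of_forall
      intro N
      apply mul_nonneg (div_nonneg (Nat.cast_nonneg N) (le_of_lt (hd N)))
      rw [hR]
      apply Finset.sum_nonneg
      intro η _
      apply Finset.prod_nonneg
      intro x _
      exact mul_nonneg (le_of_lt (inclW_pos (hd N) _)) (pow_nonneg (le_of_lt (hm0 x)) _)
    have hK0 : Tendsto (fun N : ℕ => K * (d N * (1 + Real.log N))) atTop (nhds 0) := by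
      have := hdlog1.const_mul K
      simpa using this
    exact tendsto_of_tendsto_of_tendsto_of_le_of_le' tendsto_const_nhds hK0 hnonneg hbound
  -- assemble
  have main : Tendsto (fun N : ℕ =>
      ((N:ℝ) * inclW (d N) N / d N) * (∑ x, mstar x ^ N) + ((N:ℝ) / d N) * R N)
      atTop (nhds (Sstar.card : ℝ)) := by
    have := (stepB.mul stepC).add stepD
    simpa using this
  apply main.congr'
  filter_upwards [eventually_ge_atTop 1] with N hN
  exact (stepA N hN).symm
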